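/- Let D be a digraph of order n ≥ 3, let C := x_1x_2…x_{n-1}x_1 be a cycle of length n−1 in D (subscripts modulo n−1), and let y be the vertex not on C. If D contains no Hamiltonian bypass, then for every i ∈ [1,n−1], at most one of yx_i, yx_{i+1} is an arc of D, and at most one of x_iy, x_{i+1}y is an arc of D. -/

import Mathlib

open Finset

variable {V : Type*}

/-- Out-degree of a vertex. -/
def outDeg [Fintype V] (A : V → V → Prop) [DecidableRel A] (v : V) : ℕ :=
  (Finset.univ.filter (fun u => A v u)).card

/-- In-degree of a vertex. -/
def inDeg [Fintype V] (A : V → V → Prop) [DecidableRel A] (v : V) : ℕ :=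
  (Finset.univ.filter (fun u => A u v)).card

/-- Degree of a vertex: out-degree plus in-degree. -/
def deg [Fintype V] (A : V → V → Prop) [DecidableRel A] (v : V) : ℕ :=
  outDeg A v + inDeg A v

/-- Two vertices are adjacent if there is an arc between them in some direction. -/
def Adj (A : V → V → Prop) (u v : V) : Prop := A u v ∨ A v u

/-- Condition (*): for every pair of non-adjacent vertices with a common in-neighbour,
`min {d(x), d(y)} ≥ n - 1` and `d(x) + d(y) ≥ 2n - 1`. -/
def CondStar [Fintype V] (A : V → V → Prop) [DecidableRel A] : Prop :=
  ∀ x y : V, x ≠ y → ¬ Adj A x y → (∃ z : V, A z x ∧ A z y) →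
    min (deg A x) (deg A y) ≥ Fintype.card V - 1 ∧
    deg A x + deg A y ≥ 2 * Fintype.card V - 1

/-- A Hamiltonian bypass: an ordering `x₁, …, xₙ` of all vertices such that
`x₁x₂, …, x_{n-1}xₙ` and `x₁xₙ` are all arcs. -/
def HamBypass (A : V → V → Prop) : Prop :=
  ∃ l : List V, l.Nodup ∧ (∀ v : V, v ∈ l) ∧ l.Chain' A ∧
    ∃ a b : V, l.head? = some a ∧ l.getLast? = some b ∧ A a b

/-- The cycle, listed starting at index `j`. -/
def cycList {V : Type*} (m : ℕ) (x : ZMod m → V) (j : ZMod m) : List V :=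
  List.map (fun k : ℕ => x (j + (k : ZMod m))) (List.range m)

lemma cycList_length {V : Type*} (m : ℕ) (x : ZMod m → V) (j : ZMod m) :
    (cycList m x j).length = m := by simp [cycList]

lemma cycList_mem {V : Type*} (m : ℕ) [NeZero m] (x : ZMod m → V) (j w : ZMod m) :
    x w ∈ cycList m x j := by
  simp only [cycList, List.mem_map, List.mem_range]
  refine ⟨(w - j).val, ZMod.val_lt _, ?_⟩
  congr 1
  rw [ZMod.natCast_val, ZMod.cast_id]
  ring

lemma cycList_mem' {V : Type*} (m : ℕ) (x : ZMod m → V) (j : ZMod m) (v : V)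
    (hv : v ∈ cycList m x j) : ∃ w, v = x w := by
  simp only [cycList, List.mem_map, List.mem_range] at hv
  obtain ⟨k, -, rfl⟩ := hv
  exact ⟨_, rfl⟩

lemma cycList_nodup {V : Type*} (m : ℕ) (x : ZMod m → V) (hinj : Function.Injective x)
    (j : ZMod m) : (cycList m x j).Nodup := by
  refine List.Nodup.map_on ?_ List.nodup_range
  intro a ha b hb hab
  simp only [List.mem_range] at ha hb
  have h1 : ((a : ZMod m)) = b := add_left_cancel (hinj hab)
  have h2 := congrArg ZMod.val h1
  rwa [ZMod.val_cast_of_lt ha, ZMod.val_cast_of_lt hb] at h2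

lemma cycList_chain' {V : Type*} (m : ℕ) (A : V → V → Prop) (x : ZMod m → V)
    (hcyc : ∀ i : ZMod m, A (x i) (x (i + 1))) (j : ZMod m) :
    (cycList m x j).Chain' A := by
  unfold List.Chain'
  rw [List.isChain_iff_getElem]
  intro k hk
  rw [cycList_length] at hk
  simp only [cycList, List.get_eq_getElem, List.getElem_map, List.getElem_range]
  have h1 : j + ((k + 1 : ℕ) : ZMod m) = (j + (k : ZMod m)) + 1 := by push_cast; ring
  rw [h1]
  exact hcyc _

lemma cycList_head? {V : Type*} (m : ℕ) (hm : 0 < m) (x : ZMod m → V) (j : ZMod m) :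
    (cycList m x j).head? = some (x j) := by
  rw [List.head?_eq_getElem?]
  have h0 : 0 < (cycList m x j).length := by rw [cycList_length]; omega
  rw [List.getElem?_eq_getElem h0]
  simp [cycList, List.getElem_map, List.getElem_range]

lemma cycList_getLast? {V : Type*} (m : ℕ) (hm : 0 < m) (x : ZMod m → V) (j : ZMod m) :
    (cycList m x j).getLast? = some (x (j - 1)) := by
  rw [List.getLast?_eq_getElem?, cycList_length]
  have h1 : m - 1 < (cycList m x j).length := by rw [cycList_length]; omega
  rw [List.getElem?_eq_getElem h1]
  simp only [cycList, List.getElem_map, List.getElem_range, Option.some_inj]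
  congr 1
  have h2 : ((m - 1 : ℕ) : ZMod m) = -1 := by
    have h3 : ((m - 1 : ℕ) : ZMod m) + 1 = 0 := by
      have h4 : (((m - 1) + 1 : ℕ) : ZMod m) = 0 := by
        rw [show m - 1 + 1 = m by omega]; exact ZMod.natCast_self m
      push_cast at h4
      exact h4
    linear_combination h3
  rw [h2]
  ring

theorem stmt2 [Fintype V] [DecidableEq V] (A : V → V → Prop) [DecidableRel A]
    (hloop : Irreflexive A)
    (n : ℕ) (hcard : Fintype.card V = n) (hn : 3 ≤ n)
    (x : ZMod (n - 1) → V) (hinj : Function.Injective x)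
    (hcyc : ∀ i : ZMod (n - 1), A (x i) (x (i + 1)))
    (y : V) (hy : ∀ i : ZMod (n - 1), y ≠ x i)
    (hnb : ¬ HamBypass A) :
    ∀ i : ZMod (n - 1),
      ¬ (A y (x i) ∧ A y (x (i + 1))) ∧ ¬ (A (x i) y ∧ A (x (i + 1)) y) := by
  intro i
  have hm2 : 2 ≤ n - 1 := by omega
  haveI : NeZero (n - 1) := ⟨by omega⟩
  have hsurj : ∀ v : V, v ≠ y → ∃ w, v = x w := by
    intro v hv
    by_contra hno
    push_neg at hno
    have hyim : y ∉ Finset.univ.image x := by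
      simp only [Finset.mem_image, Finset.mem_univ, true_and, not_exists]
      intro w hw
      exact hy w hw.symm
    have hvim : v ∉ insert y (Finset.univ.image x) := by
      simp only [Finset.mem_insert, Finset.mem_image, Finset.mem_univ, true_and,
        not_or, not_exists]
      exact ⟨hv, fun w hw => hno w hw.symm⟩
    have hc1 : (Finset.univ.image x).card = n - 1 := by
      rw [Finset.card_image_of_injective _ hinj, Finset.card_univ, ZMod.card]
    have hc2 : (insert v (insert y (Finset.univ.image x))).card = (n - 1) + 2 := by
      rw [Finset.card_insert_of_notMem hvim, Finset.card_insert_of_notMem hyim, hc1]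
    have hle := Finset.card_le_univ (insert v (insert y (Finset.univ.image x)))
    rw [hc2, hcard] at hle
    omega
  have hynotin : ∀ j, y ∉ cycList (n - 1) x j := by
    intro j hmem
    obtain ⟨w, hw⟩ := cycList_mem' _ x j y hmem
    exact hy w hw
  have hall : ∀ j (v : V), v ≠ y → v ∈ cycList (n - 1) x j := by
    intro j v hv
    obtain ⟨w, rfl⟩ := hsurj v hv
    exact cycList_mem _ x j w
  constructor
  · rintro ⟨h1, h2⟩
    apply hnb
    refine ⟨y :: cycList (n - 1) x (i + 1), ?_, ?_, ?_, y, x i, rfl, ?_, h1⟩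
    · exact List.nodup_cons.mpr ⟨hynotin _, cycList_nodup _ x hinj _⟩
    · intro v
      by_cases hv : v = y
      · simp [hv]
      · exact List.mem_cons_of_mem _ (hall _ v hv)
    · unfold List.Chain'
      rw [List.isChain_cons]
      refine ⟨?_, cycList_chain' _ A x hcyc _⟩
      intro z hz
      rw [cycList_head? _ (by omega) x] at hz
      rw [Option.mem_def, Option.some_inj] at hz
      rw [hz] at h2
      exact h2
    · rw [List.getLast?_cons, cycList_getLast? _ (by omega) x]
      simp [add_sub_cancel_right]
  · rintro ⟨h1, h2⟩
    apply hnb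
    refine ⟨cycList (n - 1) x (i + 1) ++ [y], ?_, ?_, ?_, x (i + 1), y, ?_,
      List.getLast?_concat, h2⟩
    · rw [List.nodup_append']
      refine ⟨cycList_nodup _ x hinj _, List.nodup_singleton y, ?_⟩
      intro a ha hb
      simp only [List.mem_singleton] at hb
      subst hb
      exact hynotin _ ha
    · intro v
      rw [List.mem_append]
      by_cases hv : v = y
      · simp [hv]
      · exact Or.inl (hall _ v hv)
    · unfold List.Chain'
      rw [List.isChain_append]
      refine ⟨cycList_chain' _ A x hcyc _, List.isChain_singleton y, ?_⟩
      intro a ha b hb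
      rw [cycList_getLast? _ (by omega) x] at ha
      simp only [Option.mem_def, Option.some_inj, List.head?_cons] at ha hb
      subst hb
      rw [show (i + 1 - 1 : ZMod (n - 1)) = i from add_sub_cancel_right i 1] at ha
      rw [ha] at h1
      exact h1
    · rw [List.head?_append, cycList_head? _ (by omega) x]
      rfl
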